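/- Let y \in {0,1}^d, y \neq 0, and let Z \subseteq {0,1}^d be a set of vectors each satisfying z \leq y coordinatewise, with 0, y \notin Z. If y \in cone(Z) then {0, y} is not an edge of conv(Z \cup {0, y}). -/

import Mathlib

/-- The set of vertices of the 0/1-cube in `ℝ^d`. -/
def cubeVerts (d : ℕ) : Set (Fin d → ℝ) := {x | ∀ i, x i = 0 ∨ x i = 1}

/-- The conical hull of a set `Z ⊆ ℝ^d`: all finite nonnegative combinations. -/
def coneHull {d : ℕ} (Z : Set (Fin d → ℝ)) : Set (Fin d → ℝ) :=
  {x | ∃ (s : Finset (Fin d → ℝ)) (lam : (Fin d → ℝ) → ℝ),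
        ↑s ⊆ Z ∧ (∀ z ∈ s, 0 ≤ lam z) ∧ x = ∑ z ∈ s, lam z • z}

lemma cube_ne_zero {d : ℕ} {v : Fin d → ℝ} (hv : v ∈ cubeVerts d) (h0 : v ≠ 0) :
    ∃ i, v i = 1 := by
  by_contra h
  push_neg at h
  apply h0; funext i
  rcases hv i with h1 | h1
  · exact h1
  · exact absurd h1 (h i)

theorem stmt19 {d : ℕ} (y : Fin d → ℝ) (hy : y ∈ cubeVerts d) (hy0 : y ≠ 0)
    (Z : Set (Fin d → ℝ)) (hZ : Z ⊆ cubeVerts d)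
    (hle : ∀ z ∈ Z, ∀ i, z i ≤ y i) (h0Z : (0 : Fin d → ℝ) ∉ Z) (hyZ : y ∉ Z)
    (hcone : y ∈ coneHull Z) :
    ¬ IsExtreme ℝ (convexHull ℝ (Z ∪ {0, y})) (segment ℝ 0 y) := by
  intro hExt
  obtain ⟨s, lam, hsZ, hlam, hsum⟩ := hcone
  obtain ⟨i0, hyi0⟩ := cube_ne_zero hy hy0
  set T : ℝ := ∑ z ∈ s, lam z with hTdef
  have hT1 : 1 ≤ T := by
    have h1 : y i0 = ∑ z ∈ s, lam z * z i0 := by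
      rw [hsum]; simp [Finset.sum_apply]
    have h2 : ∀ z ∈ s, lam z * z i0 ≤ lam z := by
      intro z hz
      have hz1 : z i0 ≤ 1 := by rcases hZ (hsZ hz) i0 with h | h <;> simp [h]
      nlinarith [hlam z hz]
    calc (1 : ℝ) = y i0 := hyi0.symm
      _ = ∑ z ∈ s, lam z * z i0 := h1
      _ ≤ ∑ z ∈ s, lam z := Finset.sum_le_sum h2
  have hT0 : (0 : ℝ) < T := lt_of_lt_of_le one_pos hT1
  obtain ⟨z0, hz0s, hz0pos⟩ : ∃ z ∈ s, 0 < lam z := by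
    by_contra h
    push_neg at h
    apply hy0
    rw [hsum]
    apply Finset.sum_eq_zero
    intro z hz
    rw [le_antisymm (h z hz) (hlam z hz), zero_smul]
  have hz0Z : z0 ∈ Z := hsZ hz0s
  have hz0T : lam z0 ≤ T :=
    Finset.single_le_sum (fun z hz => hlam z hz) hz0s
  set c : ℝ := lam z0 / 2 with hcdef
  have hc0 : 0 < c := by positivity
  set T' : ℝ := T - c with hT'def
  have hT'0 : 0 < T' := by
    have : c < T := by
      have : lam z0 / 2 < T := by nlinarith
      simpa [hcdef]
    simpa [hT'def] using sub_pos.mpr this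
  set lam' : (Fin d → ℝ) → ℝ := fun z => lam z - (if z = z0 then c else 0) with hlam'def
  have hlam'nonneg : ∀ z ∈ s, 0 ≤ lam' z := by
    intro z hz
    by_cases h : z = z0
    · subst h
      have hval : lam' z = lam z - c := by simp [hlam'def]
      rw [hval, hcdef]; linarith
    · simp only [hlam'def, if_neg h, sub_zero]; exact hlam z hz
  have hlam'sum : ∑ z ∈ s, lam' z = T' := by
    simp only [hlam'def, Finset.sum_sub_distrib]
    rw [Finset.sum_ite_eq' s z0 (fun _ => c), if_pos hz0s]
  set x : Fin d → ℝ := T⁻¹ • y with hxdef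
  set x2 : Fin d → ℝ := T'⁻¹ • (y - c • z0) with hx2def
  -- x ∈ segment 0 y
  have hxseg : x ∈ segment ℝ 0 y := by
    refine ⟨1 - T⁻¹, T⁻¹, ?_, by positivity, by ring, by simp [hxdef]⟩
    have : T⁻¹ ≤ 1 := by
      rw [inv_le_one_iff₀]; right; exact hT1
    linarith
  -- x2 ∈ convexHull Z
  have hx2conv : x2 ∈ convexHull ℝ Z := by
    have hcm : s.centerMass lam' id ∈ convexHull ℝ Z := by
      apply Finset.centerMass_mem_convexHull _ hlam'nonneg
      · rw [hlam'sum]; exact hT'0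
      · intro z hz; exact hsZ hz
    have heq : s.centerMass lam' id = x2 := by
      rw [Finset.centerMass, hlam'sum]
      congr 1
      have : ∑ z ∈ s, lam' z • (id z) = y - c • z0 := by
        simp only [hlam'def, id_eq, sub_smul, Finset.sum_sub_distrib]
        rw [← hsum]
        congr 1
        have : ∀ z ∈ s, (if z = z0 then c else 0) • z = (if z = z0 then c • z0 else 0) := by
          intro z hz
          by_cases h : z = z0 <;> simp [h]
        rw [Finset.sum_congr rfl this, Finset.sum_ite_eq' s z0 (fun _ => c • z0), if_pos hz0s]
      rw [this]
    rw [← heq]; exact hcm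
  have hz0conv : z0 ∈ convexHull ℝ (Z ∪ {0, y}) :=
    subset_convexHull ℝ _ (Or.inl hz0Z)
  have hx2conv' : x2 ∈ convexHull ℝ (Z ∪ {0, y}) :=
    convexHull_mono Set.subset_union_left hx2conv
  set t : ℝ := c / T with htdef
  have ht0 : 0 < t := by positivity
  have ht1 : t < 1 := by
    rw [htdef, div_lt_one hT0]
    nlinarith
  have hxopen : x ∈ openSegment ℝ z0 x2 := by
    refine ⟨t, 1 - t, ht0, by linarith, by ring, ?_⟩
    funext i
    simp only [hxdef, hx2def, htdef, Pi.add_apply, Pi.smul_apply, Pi.sub_apply, smul_eq_mul]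
    field_simp
    ring
  have hkey := hExt.2 hz0conv hx2conv' hxseg hxopen
  obtain ⟨a, b, ha, hb, hab, heq⟩ := hkey
  obtain ⟨i1, hi1⟩ := cube_ne_zero (hZ hz0Z) (fun h => h0Z (h ▸ hz0Z))
  have heq' : ∀ i, b * y i = z0 i := by
    intro i
    have := congrFun heq i
    simpa using this
  have hyi1 : y i1 = 1 := by
    rcases hy i1 with h | h
    · exfalso; have := heq' i1; rw [h, hi1] at this; simp at this
    · exact h
  have hb1 : b = 1 := by
    have := heq' i1
    rw [hyi1, hi1] at this
    linarith [this]
  have : z0 = y := by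
    funext i
    have := heq' i
    rw [hb1] at this
    linarith
  exact hyZ (this ▸ hz0Z)
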